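/- arXiv:1904.09332 — 3 statements merged into one kernel-verified Lean document; each statement's English description precedes it below -/
import Mathlib

section
/- Let S and M be symmetric positive definite real N×N matrices and f ∈ ℝ^N. For every y ≥ 0, the solution w₋(y) of (S + e^{-y} M) w₋(y) = f satisfies ‖w₋(y)‖_M ≤ (1/λ_min(S, M)) · ‖f‖_{M^{-1}}, where λ_min(S, M) := inf over nonzero x ∈ ℝ^N of (xᵀ S x)/(xᵀ M x). -/
open Matrix

section Aux

variable {N : ℕ}

private lemma quad_symm' (M : Matrix (Fin N) (Fin N) ℝ) (hM : M.IsHermitian) (u v : Fin N → ℝ) :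
    u ⬝ᵥ M.mulVec v = v ⬝ᵥ M.mulVec u := by
  rw [dotProduct_mulVec, ← mulVec_transpose, dotProduct_comm]
  congr 1
  rw [show Mᵀ = M from hM]

private lemma quad_cont' (M : Matrix (Fin N) (Fin N) ℝ) :
    Continuous fun x : Fin N → ℝ => x ⬝ᵥ M.mulVec x := by
  have h1 : Continuous fun x : Fin N → ℝ => M.mulVec x :=
    M.mulVecLin.continuous_of_finiteDimensional
  exact continuous_finset_sum _ fun i _ =>
    ((continuous_apply i).mul ((continuous_apply i).comp h1))

private lemma quad_smul' (M : Matrix (Fin N) (Fin N) ℝ) (c : ℝ) (x : Fin N → ℝ) :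
    (c • x) ⬝ᵥ M.mulVec (c • x) = c^2 * (x ⬝ᵥ M.mulVec x) := by
  rw [mulVec_smul, smul_dotProduct, dotProduct_smul]
  ring_nf

private lemma quad_cs' (M : Matrix (Fin N) (Fin N) ℝ) (hM : M.PosSemidef) (u v : Fin N → ℝ) :
    (u ⬝ᵥ M.mulVec v)^2 ≤ (u ⬝ᵥ M.mulVec u) * (v ⬝ᵥ M.mulVec v) := by
  have key : ∀ t : ℝ, 0 ≤ (v ⬝ᵥ M.mulVec v) * (t*t) + (2 * (u ⬝ᵥ M.mulVec v)) * t
      + (u ⬝ᵥ M.mulVec u) := by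
    intro t
    have h0 := hM.dotProduct_mulVec_nonneg (u + t • v)
    simp only [star_trivial] at h0
    simp only [mulVec_add, mulVec_smul, dotProduct_add, add_dotProduct,
      dotProduct_smul, smul_dotProduct, smul_eq_mul] at h0
    rw [quad_symm' M hM.1 v u] at h0
    nlinarith [h0]
  have hd := discrim_le_zero key
  rw [discrim] at hd
  nlinarith [hd]

private lemma quad_ratio_bound' (hN : N ≠ 0) (S M : Matrix (Fin N) (Fin N) ℝ)
    (hS : S.PosDef) (hM : M.PosDef) :
    ∃ c > 0, ∀ x : Fin N → ℝ, c * (x ⬝ᵥ M.mulVec x) ≤ x ⬝ᵥ S.mulVec x := by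
  haveI : Nonempty (Fin N) := ⟨⟨0, Nat.pos_of_ne_zero hN⟩⟩
  have hsph : IsCompact (Metric.sphere (0 : Fin N → ℝ) 1) := isCompact_sphere _ _
  have hne : (Metric.sphere (0 : Fin N → ℝ) 1).Nonempty := by
    obtain ⟨x, hx⟩ := exists_norm_eq (Fin N → ℝ) (zero_le_one' ℝ)
    exact ⟨x, by simpa [mem_sphere_zero_iff_norm] using hx⟩
  obtain ⟨x0, hx0, hmin⟩ := hsph.exists_isMinOn hne (quad_cont' S).continuousOn
  obtain ⟨x1, hx1, hmax⟩ := hsph.exists_isMaxOn hne (quad_cont' M).continuousOn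
  have hx0n : x0 ≠ 0 := by
    intro h; rw [mem_sphere_zero_iff_norm, h, norm_zero] at hx0; norm_num at hx0
  have ha : 0 < x0 ⬝ᵥ S.mulVec x0 := by simpa using hS.dotProduct_mulVec_pos hx0n
  have hx1n : x1 ≠ 0 := by
    intro h; rw [mem_sphere_zero_iff_norm, h, norm_zero] at hx1; norm_num at hx1
  have hb : 0 < x1 ⬝ᵥ M.mulVec x1 := by simpa using hM.dotProduct_mulVec_pos hx1n
  set a := x0 ⬝ᵥ S.mulVec x0
  set b := x1 ⬝ᵥ M.mulVec x1
  refine ⟨a / b, div_pos ha hb, fun x => ?_⟩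
  rcases eq_or_ne x 0 with rfl | hx
  · simp
  · have hnx : 0 < ‖x‖ := norm_pos_iff.2 hx
    set u : Fin N → ℝ := ‖x‖⁻¹ • x with hu
    have hus : x = ‖x‖ • u := by
      rw [hu, smul_smul, mul_inv_cancel₀ hnx.ne', one_smul]
    have humem : u ∈ Metric.sphere (0 : Fin N → ℝ) 1 := by
      rw [mem_sphere_zero_iff_norm, hu, norm_smul, norm_inv, norm_norm,
        inv_mul_cancel₀ hnx.ne']
    have h1 : a ≤ u ⬝ᵥ S.mulVec u := hmin humem
    have h2 : u ⬝ᵥ M.mulVec u ≤ b := hmax humem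
    have eS : x ⬝ᵥ S.mulVec x = ‖x‖^2 * (u ⬝ᵥ S.mulVec u) := by
      conv_lhs => rw [hus]
      rw [quad_smul']
    have eM : x ⬝ᵥ M.mulVec x = ‖x‖^2 * (u ⬝ᵥ M.mulVec u) := by
      conv_lhs => rw [hus]
      rw [quad_smul']
    have hqMu : 0 ≤ u ⬝ᵥ M.mulVec u := by simpa using hM.posSemidef.dotProduct_mulVec_nonneg u
    rw [eS, eM, div_mul_eq_mul_div, div_le_iff₀ hb]
    nlinarith [mul_nonneg (mul_nonneg (sub_nonneg.2 h1) hb.le) (sq_nonneg ‖x‖),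
      mul_nonneg (mul_nonneg ha.le (sub_nonneg.2 h2)) (sq_nonneg ‖x‖)]

end Aux

/-- The smallest generalized eigenvalue of the pair `(S, M)`:
`λ_min(S, M) = inf_{x ≠ 0} (xᵀ S x)/(xᵀ M x)`. -/
noncomputable def lamMinGen {N : ℕ} (S M : Matrix (Fin N) (Fin N) ℝ) : ℝ :=
  sInf ((fun x : Fin N → ℝ => (x ⬝ᵥ S.mulVec x) / (x ⬝ᵥ M.mulVec x)) '' {x | x ≠ 0})

/-- The `M`-norm `‖x‖_M = √(xᵀ M x)`. -/
noncomputable def normWeighted {N : ℕ} (M : Matrix (Fin N) (Fin N) ℝ) (x : Fin N → ℝ) : ℝ :=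
  Real.sqrt (x ⬝ᵥ M.mulVec x)

/-- Estimate (3.13b): for symmetric positive definite stiffness and mass matrices `S, M`
and any `y ≥ 0`, the solution `w₋(y)` of `(S + e^{-y} M) w₋(y) = f` satisfies
`‖w₋(y)‖_M ≤ (1/λ_min(S,M)) ‖f‖_{M⁻¹}`. -/
theorem wminus_stability {N : ℕ} (S M : Matrix (Fin N) (Fin N) ℝ)
    (hS : S.PosDef) (hM : M.PosDef) (f : Fin N → ℝ) (y : ℝ) (hy : 0 ≤ y)
    (wminus : Fin N → ℝ) (hw : (S + Real.exp (-y) • M).mulVec wminus = f) :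
    normWeighted M wminus ≤ (1 / lamMinGen S M) * normWeighted M⁻¹ f := by
  rcases eq_or_ne N 0 with hN0 | hN
  · subst hN0
    simp [normWeighted, dotProduct]
  obtain ⟨c, hc, hcb⟩ := quad_ratio_bound' hN S M hS hM
  haveI : Nonempty (Fin N) := ⟨⟨0, Nat.pos_of_ne_zero hN⟩⟩
  set lam := lamMinGen S M with hlamdef
  set Q := (fun x : Fin N → ℝ => (x ⬝ᵥ S.mulVec x) / (x ⬝ᵥ M.mulVec x)) '' {x | x ≠ 0}
    with hQdef
  have hQbound : ∀ z ∈ Q, c ≤ z := by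
    rintro z ⟨x, hx, rfl⟩
    have hqM : 0 < x ⬝ᵥ M.mulVec x := by simpa using hM.dotProduct_mulVec_pos hx
    rw [le_div_iff₀ hqM]
    simpa [mul_comm] using hcb x
  have hQne : Q.Nonempty := by
    refine ⟨_, ⟨(fun _ => 1 : Fin N → ℝ), ?_, rfl⟩⟩
    intro h
    have := congrFun h ⟨0, Nat.pos_of_ne_zero hN⟩
    norm_num at this
  have hQbdd : BddBelow Q := ⟨c, hQbound⟩
  have hlam_ge : c ≤ lam := le_csInf hQne hQbound
  have hlam_pos : 0 < lam := lt_of_lt_of_le hc hlam_ge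
  have hlam_le : ∀ x : Fin N → ℝ, x ≠ 0 → lam * (x ⬝ᵥ M.mulVec x) ≤ x ⬝ᵥ S.mulVec x := by
    intro x hx
    have hqM : 0 < x ⬝ᵥ M.mulVec x := by simpa using hM.dotProduct_mulVec_pos hx
    have h1 : lam ≤ (x ⬝ᵥ S.mulVec x) / (x ⬝ᵥ M.mulVec x) := csInf_le hQbdd ⟨x, hx, rfl⟩
    rw [le_div_iff₀ hqM] at h1
    simpa [mul_comm] using h1
  -- notation
  set w := wminus
  have hB2 : 0 ≤ f ⬝ᵥ M⁻¹.mulVec f := by simpa using hM.inv.posSemidef.dotProduct_mulVec_nonneg f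
  rcases eq_or_ne w 0 with hw0 | hw0
  · rw [show normWeighted M w = 0 by rw [hw0]; simp [normWeighted]]
    have : 0 ≤ normWeighted M⁻¹ f := Real.sqrt_nonneg _
    positivity
  have hqMw : 0 < w ⬝ᵥ M.mulVec w := by simpa using hM.dotProduct_mulVec_pos hw0
  have hqSw : 0 < w ⬝ᵥ S.mulVec w := by simpa using hS.dotProduct_mulVec_pos hw0
  have hexp : 0 < Real.exp (-y) := Real.exp_pos _
  have hf : w ⬝ᵥ f = w ⬝ᵥ S.mulVec w + Real.exp (-y) * (w ⬝ᵥ M.mulVec w) := by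
    rw [← hw]
    simp [add_mulVec, smul_mulVec, dotProduct_add, dotProduct_smul, smul_eq_mul]
  have h1 : lam * (w ⬝ᵥ M.mulVec w) ≤ w ⬝ᵥ f := by
    have := hlam_le w hw0
    nlinarith [mul_pos hexp hqMw]
  have hwf0 : 0 ≤ w ⬝ᵥ f := le_trans (by positivity) h1
  -- Cauchy–Schwarz
  have hdet : IsUnit M.det := hM.det_pos.ne'.isUnit
  set v : Fin N → ℝ := M⁻¹.mulVec f with hv
  have hMv : M.mulVec v = f := by
    rw [hv, mulVec_mulVec, Matrix.mul_nonsing_inv _ hdet, one_mulVec]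
  have e2 : v ⬝ᵥ M.mulVec v = f ⬝ᵥ M⁻¹.mulVec f := by
    rw [hMv, hv, dotProduct_comm]
  have cs : (w ⬝ᵥ f)^2 ≤ (w ⬝ᵥ M.mulVec w) * (f ⬝ᵥ M⁻¹.mulVec f) := by
    have := quad_cs' M hM.posSemidef w v
    rwa [hMv, dotProduct_comm v f] at this
  set A := normWeighted M w with hA
  set B := normWeighted M⁻¹ f with hB
  have hA2 : A^2 = w ⬝ᵥ M.mulVec w := Real.sq_sqrt hqMw.le
  have hB2' : B^2 = f ⬝ᵥ M⁻¹.mulVec f := Real.sq_sqrt hB2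
  have hApos : 0 < A := Real.sqrt_pos.2 hqMw
  have hBnn : 0 ≤ B := Real.sqrt_nonneg _
  have hAB : w ⬝ᵥ f ≤ A * B := by
    have h3 : (w ⬝ᵥ f)^2 ≤ (A * B)^2 := by
      rw [mul_pow, hA2, hB2']; exact cs
    have := Real.sqrt_le_sqrt h3
    rwa [Real.sqrt_sq hwf0, Real.sqrt_sq (by positivity)] at this
  have hkey : lam * A^2 ≤ A * B := by rw [hA2]; exact le_trans h1 hAB
  have hfin : lam * A ≤ B := by
    have h4 : (lam * A) * A ≤ B * A := by nlinarith [hkey]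
    exact le_of_mul_le_mul_right h4 hApos
  rw [one_div, inv_mul_eq_div, le_div_iff₀ hlam_pos, mul_comm]
  exact hfin
end

section
/- Let S and M be symmetric positive definite real N×N matrices, f ∈ ℝ^N, and for y ≥ 0 set w₋(y) := (S + e^{-y} M)^{-1} f and w₊(y) := (e^{-y} S + M)^{-1} f. Let (y_{j,-}, τ_{j,-})_{j=1}^{M₋} and (y_{j,+}, τ_{j,+})_{j=1}^{M₊} be quadrature rules with all nodes y_{j,±} ≥ 0, all weights τ_{j,±} ≥ 0, and Σ_j τ_{j,-} ≤ 1 and Σ_j τ_{j,+} ≤ 1. For s ∈ (0,1) put s₋ := 1-s, s₊ := s, β₀(t) := sin(πt)/(πt), and define the fully discrete solution u(s) := β₀(s₋) Σ_{j=1}^{M₋} τ_{j,-} w₋(y_{j,-}/s₋) + β₀(s₊) Σ_{j=1}^{M₊} τ_{j,+} w₊(y_{j,+}/s₊). Then for every s ∈ (0,1): ‖u(s)‖_M ≤ (4/π) · max(1, 1/λ_min(S, M)) · ‖f‖_{M^{-1}}. -/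
open Matrix Real Finset

section Helpers

lemma dot_symm {N : ℕ} {M : Matrix (Fin N) (Fin N) ℝ} (hM : M.IsHermitian)
    (v w : Fin N → ℝ) : v ⬝ᵥ M.mulVec w = w ⬝ᵥ M.mulVec v := by
  have h : ∀ i j, M j i = M i j := fun i j => by simpa using hM.apply i j
  simp only [dotProduct, Matrix.mulVec, Finset.mul_sum]
  rw [Finset.sum_comm]
  exact Finset.sum_congr rfl fun i _ => Finset.sum_congr rfl fun j _ => by rw [h i j]; ring

lemma dot_nonneg {N : ℕ} {M : Matrix (Fin N) (Fin N) ℝ} (hM : M.PosDef)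
    (v : Fin N → ℝ) : 0 ≤ v ⬝ᵥ M.mulVec v := by
  have := hM.posSemidef.dotProduct_mulVec_nonneg v
  simpa using this

lemma cs {N : ℕ} {M : Matrix (Fin N) (Fin N) ℝ} (hM : M.PosDef)
    (v w : Fin N → ℝ) :
    (v ⬝ᵥ M.mulVec w)^2 ≤ (v ⬝ᵥ M.mulVec v) * (w ⬝ᵥ M.mulVec w) := by
  by_cases hw : w = 0
  · simp [hw, Matrix.mulVec_zero]
  have hd : 0 < w ⬝ᵥ M.mulVec w := by simpa using hM.dotProduct_mulVec_pos hw
  set t : ℝ := (v ⬝ᵥ M.mulVec w) / (w ⬝ᵥ M.mulVec w) with ht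
  have hexp : (v - t • w) ⬝ᵥ M.mulVec (v - t • w)
      = v ⬝ᵥ M.mulVec v - 2 * t * (v ⬝ᵥ M.mulVec w) + t^2 * (w ⬝ᵥ M.mulVec w) := by
    rw [Matrix.mulVec_sub, Matrix.mulVec_smul]
    simp only [sub_dotProduct, dotProduct_sub, smul_dotProduct,
      dotProduct_smul, smul_eq_mul]
    rw [dot_symm hM.isHermitian w v]
    ring
  have h0 : 0 ≤ (v - t • w) ⬝ᵥ M.mulVec (v - t • w) := dot_nonneg hM _
  rw [hexp] at h0
  have ht' : t * (w ⬝ᵥ M.mulVec w) = v ⬝ᵥ M.mulVec w := by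
    rw [ht, div_mul_cancel₀ _ hd.ne']
  nlinarith [h0, hd]

lemma dot_le_norm_mul_norm {N : ℕ} {M : Matrix (Fin N) (Fin N) ℝ} (hM : M.PosDef)
    (v w : Fin N → ℝ) :
    v ⬝ᵥ M.mulVec w ≤ Real.sqrt (v ⬝ᵥ M.mulVec v) * Real.sqrt (w ⬝ᵥ M.mulVec w) := by
  have h1 := cs hM v w
  calc v ⬝ᵥ M.mulVec w ≤ |v ⬝ᵥ M.mulVec w| := le_abs_self _
    _ = Real.sqrt ((v ⬝ᵥ M.mulVec w)^2) := (Real.sqrt_sq_eq_abs _).symm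
    _ ≤ Real.sqrt ((v ⬝ᵥ M.mulVec v) * (w ⬝ᵥ M.mulVec w)) := Real.sqrt_le_sqrt h1
    _ = Real.sqrt (v ⬝ᵥ M.mulVec v) * Real.sqrt (w ⬝ᵥ M.mulVec w) :=
        Real.sqrt_mul (dot_nonneg hM v) _

end Helpers

/-- `w₋(y) = (S + e^{-y} M)⁻¹ f`. -/
noncomputable def wMinus {N : ℕ} (S M : Matrix (Fin N) (Fin N) ℝ) (f : Fin N → ℝ)
    (y : ℝ) : Fin N → ℝ :=
  (S + Real.exp (-y) • M)⁻¹.mulVec f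

/-- `w₊(y) = (e^{-y} S + M)⁻¹ f`. -/
noncomputable def wPlus {N : ℕ} (S M : Matrix (Fin N) (Fin N) ℝ) (f : Fin N → ℝ)
    (y : ℝ) : Fin N → ℝ :=
  (Real.exp (-y) • S + M)⁻¹.mulVec f

/-- `β₀(t) = sin(πt)/(πt)`. -/
noncomputable def beta0 (t : ℝ) : ℝ := Real.sin (Real.pi * t) / (Real.pi * t)

section NormW

lemma normWeighted_nonneg {N : ℕ} (M : Matrix (Fin N) (Fin N) ℝ) (x : Fin N → ℝ) :
    0 ≤ normWeighted M x := Real.sqrt_nonneg _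

lemma normWeighted_add_le {N : ℕ} {M : Matrix (Fin N) (Fin N) ℝ} (hM : M.PosDef)
    (a b : Fin N → ℝ) :
    normWeighted M (a + b) ≤ normWeighted M a + normWeighted M b := by
  unfold normWeighted
  have hexp : (a + b) ⬝ᵥ M.mulVec (a + b)
      = a ⬝ᵥ M.mulVec a + 2 * (a ⬝ᵥ M.mulVec b) + b ⬝ᵥ M.mulVec b := by
    rw [Matrix.mulVec_add]
    simp only [add_dotProduct, dotProduct_add]
    rw [dot_symm hM.isHermitian b a]
    ring
  have h1 : (a + b) ⬝ᵥ M.mulVec (a + b)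
      ≤ (Real.sqrt (a ⬝ᵥ M.mulVec a) + Real.sqrt (b ⬝ᵥ M.mulVec b))^2 := by
    rw [hexp]
    have := dot_le_norm_mul_norm hM a b
    have ha := Real.sq_sqrt (dot_nonneg hM a)
    have hb := Real.sq_sqrt (dot_nonneg hM b)
    nlinarith
  calc Real.sqrt ((a + b) ⬝ᵥ M.mulVec (a + b))
      ≤ Real.sqrt ((Real.sqrt (a ⬝ᵥ M.mulVec a) + Real.sqrt (b ⬝ᵥ M.mulVec b))^2) :=
        Real.sqrt_le_sqrt h1
    _ = Real.sqrt (a ⬝ᵥ M.mulVec a) + Real.sqrt (b ⬝ᵥ M.mulVec b) :=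
        Real.sqrt_sq (by positivity)

lemma normWeighted_smul {N : ℕ} (M : Matrix (Fin N) (Fin N) ℝ) (c : ℝ) (x : Fin N → ℝ) :
    normWeighted M (c • x) = |c| * normWeighted M x := by
  unfold normWeighted
  rw [Matrix.mulVec_smul]
  simp only [smul_dotProduct, dotProduct_smul, smul_eq_mul]
  rw [← mul_assoc, ← pow_two, Real.sqrt_mul (sq_nonneg c), Real.sqrt_sq_eq_abs]

lemma normWeighted_sum_le {N : ℕ} {M : Matrix (Fin N) (Fin N) ℝ} (hM : M.PosDef)
    {k : ℕ} (g : Fin k → (Fin N → ℝ)) :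
    normWeighted M (∑ j, g j) ≤ ∑ j, normWeighted M (g j) := by
  classical
  induction k with
  | zero => simp [normWeighted, Matrix.mulVec_zero]
  | succ n ih =>
      rw [Fin.sum_univ_succ, Fin.sum_univ_succ]
      calc normWeighted M (g 0 + ∑ j : Fin n, g j.succ)
          ≤ normWeighted M (g 0) + normWeighted M (∑ j : Fin n, g j.succ) :=
            normWeighted_add_le hM _ _
        _ ≤ normWeighted M (g 0) + ∑ j : Fin n, normWeighted M (g j.succ) := by
            linarith [ih (fun j => g j.succ)]

lemma posDef_smul {N : ℕ} {M : Matrix (Fin N) (Fin N) ℝ} (hM : M.PosDef) {c : ℝ}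
    (hc : 0 < c) : (c • M).PosDef := by
  refine Matrix.PosDef.of_dotProduct_mulVec_pos ?_ ?_
  · have := hM.isHermitian
    unfold Matrix.IsHermitian at *
    rw [Matrix.conjTranspose_smul, this]
    simp
  · intro x hx
    have := hM.dotProduct_mulVec_pos hx
    simp only [Matrix.smul_mulVec, dotProduct_smul, smul_eq_mul] at *
    exact mul_pos hc (by simpa using this)

lemma solve_bound {N : ℕ} {A M : Matrix (Fin N) (Fin N) ℝ} (hA : A.PosDef) (hM : M.PosDef)
    (f : Fin N → ℝ) {c : ℝ} (hc : 0 < c)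
    (hcomp : ∀ x, c * (x ⬝ᵥ M.mulVec x) ≤ x ⬝ᵥ A.mulVec x) :
    normWeighted M (A⁻¹.mulVec f) ≤ (1/c) * normWeighted M⁻¹ f := by
  set w := A⁻¹.mulVec f with hw
  have hAf : A.mulVec w = f := by
    rw [hw, Matrix.mulVec_mulVec, Matrix.mul_nonsing_inv _ hA.det_pos.ne'.isUnit,
      Matrix.one_mulVec]
  have hMf : M.mulVec (M⁻¹.mulVec f) = f := by
    rw [Matrix.mulVec_mulVec, Matrix.mul_nonsing_inv _ hM.det_pos.ne'.isUnit, Matrix.one_mulVec]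
  have key : c * (w ⬝ᵥ M.mulVec w) ≤ normWeighted M w * normWeighted M⁻¹ f := by
    calc c * (w ⬝ᵥ M.mulVec w) ≤ w ⬝ᵥ A.mulVec w := hcomp w
      _ = w ⬝ᵥ f := by rw [hAf]
      _ = w ⬝ᵥ M.mulVec (M⁻¹.mulVec f) := by rw [hMf]
      _ ≤ Real.sqrt (w ⬝ᵥ M.mulVec w) *
            Real.sqrt ((M⁻¹.mulVec f) ⬝ᵥ M.mulVec (M⁻¹.mulVec f)) :=
          dot_le_norm_mul_norm hM w _
      _ = normWeighted M w * normWeighted M⁻¹ f := by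
          unfold normWeighted
          rw [hMf, dotProduct_comm (M⁻¹.mulVec f) f]
  by_cases hz : normWeighted M w = 0
  · rw [hz]
    have := normWeighted_nonneg M⁻¹ f
    positivity
  · have hpos : 0 < normWeighted M w := lt_of_le_of_ne (normWeighted_nonneg M w) (Ne.symm hz)
    have hsq : normWeighted M w ^ 2 = w ⬝ᵥ M.mulVec w := Real.sq_sqrt (dot_nonneg hM w)
    rw [← hsq] at key
    rw [div_mul_eq_mul_div, le_div_iff₀ hc]
    nlinarith [key, hpos]

end NormW

section Trig

lemma jordan_quarter {u : ℝ} (h0 : 0 ≤ u) (h1 : u ≤ π/4) :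
    Real.sqrt 2 / 2 * (4 / π * u) ≤ Real.sin u := by
  have hπ : (0:ℝ) < π := Real.pi_pos
  have hb : 0 ≤ 4 / π * u := by positivity
  have hb1 : 4 / π * u ≤ 1 := by
    rw [div_mul_eq_mul_div, div_le_one hπ]; linarith
  have ha : 0 ≤ 1 - 4 / π * u := by linarith
  have hmem0 : (0:ℝ) ∈ Set.Icc (0:ℝ) π := ⟨le_refl 0, le_of_lt hπ⟩
  have hmem4 : π/4 ∈ Set.Icc (0:ℝ) π := ⟨by positivity, by linarith⟩
  have key := strictConcaveOn_sin_Icc.concaveOn.2 hmem0 hmem4 ha hb (by ring)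
  have harg : (1 - 4 / π * u) • (0:ℝ) + (4 / π * u) • (π/4) = u := by
    simp only [smul_eq_mul, mul_zero, zero_add]
    field_simp
  rw [harg] at key
  simpa [Real.sin_pi_div_four, smul_eq_mul, mul_comm] using key

lemma sin_le_four_aux {s : ℝ} (h0 : 0 ≤ s) (h1 : s ≤ 1/2) :
    Real.sin (π * s) ≤ 4 * s * (1 - s) := by
  have hπ : (0:ℝ) < π := Real.pi_pos
  set t : ℝ := π/2 - π * s with htdef
  have ht0 : 0 ≤ t := by
    have : π * s ≤ π * (1/2) := by nlinarith
    simp only [htdef]; linarith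
  have ht2 : t/2 ≤ π/4 := by
    have : 0 ≤ π * s := by positivity
    simp only [htdef]; linarith
  have hsin : Real.sin (π * s) = Real.cos t := by
    rw [Real.cos_pi_div_two_sub]
  have hhalf : Real.cos t = 1 - 2 * Real.sin (t/2)^2 := by
    have h := Real.cos_two_mul' (t/2)
    have h2 := Real.sin_sq_add_cos_sq (t/2)
    have : (2:ℝ) * (t/2) = t := by ring
    rw [this] at h
    linarith
  have hj := jordan_quarter (div_nonneg ht0 (by norm_num)) ht2
  have hjs : Real.sqrt 2 / 2 * (4 / π * (t/2)) = Real.sqrt 2 * t / π := by ring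
  have hsq2 : Real.sqrt 2 ^ 2 = 2 := Real.sq_sqrt (by norm_num)
  have hlow : (Real.sqrt 2 * t / π)^2 ≤ Real.sin (t/2)^2 := by
    apply pow_le_pow_left₀ _ _ 2
    · positivity
    · rw [← hjs]; exact hj
  have hval : (Real.sqrt 2 * t / π)^2 = 2 * t^2 / π^2 := by
    rw [div_pow, mul_pow, hsq2]
  have hcos : Real.cos t ≤ 1 - 4 * t^2 / π^2 := by
    rw [hhalf]
    rw [hval] at hlow
    have : 2 * (2 * t^2 / π^2) ≤ 2 * Real.sin (t/2)^2 := by linarith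
    have h4 : 4 * t^2 / π^2 = 2 * (2 * t^2 / π^2) := by ring
    linarith
  rw [hsin]
  have hteq : t = π * (1/2 - s) := by rw [htdef]; ring
  have : 1 - 4 * t^2 / π^2 = 4 * s * (1 - s) := by
    rw [hteq]
    field_simp
    ring
  linarith

lemma sin_le_four {s : ℝ} (h0 : 0 ≤ s) (h1 : s ≤ 1) :
    Real.sin (π * s) ≤ 4 * s * (1 - s) := by
  rcases le_or_gt s (1/2) with h | h
  · exact sin_le_four_aux h0 h
  · have h' := sin_le_four_aux (by linarith : (0:ℝ) ≤ 1 - s) (by linarith)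
    have : Real.sin (π * s) = Real.sin (π * (1 - s)) := by
      rw [show π * (1 - s) = π - π * s by ring, Real.sin_pi_sub]
    rw [this]
    nlinarith

lemma beta0_pos {t : ℝ} (h0 : 0 < t) (h1 : t < 1) : 0 < beta0 t := by
  have hπ : (0:ℝ) < π := Real.pi_pos
  apply div_pos
  · exact Real.sin_pos_of_pos_of_lt_pi (by positivity) (by nlinarith)
  · positivity

lemma beta0_sum_le {s : ℝ} (h0 : 0 < s) (h1 : s < 1) :
    beta0 (1 - s) + beta0 s ≤ 4 / π := by
  have hπ : (0:ℝ) < π := Real.pi_pos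
  have hsin : Real.sin (π * (1 - s)) = Real.sin (π * s) := by
    rw [show π * (1 - s) = π - π * s by ring, Real.sin_pi_sub]
  have hsum : beta0 (1 - s) + beta0 s = Real.sin (π * s) / (π * (s * (1 - s))) := by
    unfold beta0
    rw [hsin]
    have h1s : (0:ℝ) < 1 - s := by linarith
    field_simp
    ring
  rw [hsum]
  have hden : 0 < π * (s * (1 - s)) := by
    have : (0:ℝ) < s * (1 - s) := mul_pos h0 (by linarith)
    positivity
  rw [div_le_div_iff₀ hden hπ]
  have := sin_le_four (le_of_lt h0) (le_of_lt h1)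
  nlinarith

end Trig

section LamMin

lemma continuous_quadForm {N : ℕ} (A : Matrix (Fin N) (Fin N) ℝ) :
    Continuous fun x : Fin N → ℝ => x ⬝ᵥ A.mulVec x := by
  simp only [dotProduct, Matrix.mulVec]
  exact continuous_finset_sum _ fun i _ =>
    (continuous_apply i).mul (continuous_finset_sum _ fun j _ =>
      (continuous_const.mul (continuous_apply j)))

lemma ratio_smul {N : ℕ} (S M : Matrix (Fin N) (Fin N) ℝ) {c : ℝ} (hc : c ≠ 0)
    (x : Fin N → ℝ) :
    ((c • x) ⬝ᵥ S.mulVec (c • x)) / ((c • x) ⬝ᵥ M.mulVec (c • x))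
      = (x ⬝ᵥ S.mulVec x) / (x ⬝ᵥ M.mulVec x) := by
  simp only [Matrix.mulVec_smul, smul_dotProduct, dotProduct_smul, smul_eq_mul]
  rw [← mul_assoc, ← mul_assoc]
  exact mul_div_mul_left _ _ (by positivity)

lemma lamMinGen_pos {N : ℕ} (hN : 0 < N) {S M : Matrix (Fin N) (Fin N) ℝ}
    (hS : S.PosDef) (hM : M.PosDef) : 0 < lamMinGen S M := by
  haveI : Nonempty (Fin N) := ⟨⟨0, hN⟩⟩
  have hg : ∀ x : Fin N → ℝ, x ≠ 0 → 0 < (x ⬝ᵥ S.mulVec x) / (x ⬝ᵥ M.mulVec x) := by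
    intro x hx
    exact div_pos (by simpa using hS.dotProduct_mulVec_pos hx) (by simpa using hM.dotProduct_mulVec_pos hx)
  have hcomp : IsCompact (Metric.sphere (0 : Fin N → ℝ) 1) := isCompact_sphere _ _
  have hne : (Metric.sphere (0 : Fin N → ℝ) 1).Nonempty :=
    NormedSpace.sphere_nonempty.mpr zero_le_one
  have hxne : ∀ x ∈ Metric.sphere (0 : Fin N → ℝ) 1, x ≠ 0 := by
    intro x hx
    simp only [Metric.mem_sphere, dist_zero_right] at hx
    intro h; rw [h] at hx; simp at hx
  have hcont : ContinuousOn
      (fun x : Fin N → ℝ => (x ⬝ᵥ S.mulVec x) / (x ⬝ᵥ M.mulVec x))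
      (Metric.sphere (0 : Fin N → ℝ) 1) := by
    apply ContinuousOn.div (continuous_quadForm S).continuousOn
      (continuous_quadForm M).continuousOn
    intro x hx
    exact ne_of_gt (by simpa using hM.dotProduct_mulVec_pos (hxne x hx))
  obtain ⟨x₀, hx₀mem, hmin⟩ := hcomp.exists_isMinOn hne hcont
  set m := (x₀ ⬝ᵥ S.mulVec x₀) / (x₀ ⬝ᵥ M.mulVec x₀) with hm
  have hmpos : 0 < m := hg x₀ (hxne x₀ hx₀mem)
  have hlb : ∀ x : Fin N → ℝ, x ≠ 0 → m ≤ (x ⬝ᵥ S.mulVec x) / (x ⬝ᵥ M.mulVec x) := by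
    intro x hx
    have hnx : ‖x‖ ≠ 0 := norm_ne_zero_iff.mpr hx
    set u := ‖x‖⁻¹ • x with hu
    have humem : u ∈ Metric.sphere (0 : Fin N → ℝ) 1 := by
      simp only [Metric.mem_sphere, dist_zero_right, hu, norm_smul, norm_inv, norm_norm]
      field_simp
    have h2 : m ≤ (u ⬝ᵥ S.mulVec u) / (u ⬝ᵥ M.mulVec u) := (isMinOn_iff.mp hmin) u humem
    have heq : (u ⬝ᵥ S.mulVec u) / (u ⬝ᵥ M.mulVec u)
        = (x ⬝ᵥ S.mulVec x) / (x ⬝ᵥ M.mulVec x) :=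
      ratio_smul S M (inv_ne_zero hnx) x
    rw [heq] at h2
    exact h2
  apply lt_of_lt_of_le hmpos
  apply le_csInf
  · obtain ⟨x, hx⟩ := hne
    exact ⟨_, ⟨x, hxne x hx, rfl⟩⟩
  · rintro b ⟨x, hx, rfl⟩
    exact hlb x hx

lemma lamMinGen_mul_le {N : ℕ} {S M : Matrix (Fin N) (Fin N) ℝ}
    (hS : S.PosDef) (hM : M.PosDef) (x : Fin N → ℝ) :
    lamMinGen S M * (x ⬝ᵥ M.mulVec x) ≤ x ⬝ᵥ S.mulVec x := by
  by_cases hx : x = 0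
  · simp [hx, Matrix.mulVec_zero]
  have hMx : 0 < x ⬝ᵥ M.mulVec x := by simpa using hM.dotProduct_mulVec_pos hx
  have hbdd : BddBelow ((fun x : Fin N → ℝ =>
      (x ⬝ᵥ S.mulVec x) / (x ⬝ᵥ M.mulVec x)) '' {x | x ≠ 0}) := by
    refine ⟨0, ?_⟩
    rintro b ⟨y, hy, rfl⟩
    exact le_of_lt (div_pos (by simpa using hS.dotProduct_mulVec_pos hy) (by simpa using hM.dotProduct_mulVec_pos hy))
  have hle : lamMinGen S M ≤ (x ⬝ᵥ S.mulVec x) / (x ⬝ᵥ M.mulVec x) :=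
    csInf_le hbdd ⟨x, hx, rfl⟩
  calc lamMinGen S M * (x ⬝ᵥ M.mulVec x)
      ≤ (x ⬝ᵥ S.mulVec x) / (x ⬝ᵥ M.mulVec x) * (x ⬝ᵥ M.mulVec x) :=
        mul_le_mul_of_nonneg_right hle (le_of_lt hMx)
    _ = x ⬝ᵥ S.mulVec x := div_mul_cancel₀ _ (ne_of_gt hMx)

end LamMin

/-- s-uniform stability of the fully discrete scheme (Proposition 3.4, matrix form):
for quadrature rules with nonnegative nodes, nonnegative weights summing to at most 1,
the fully discrete solution
`u(s) = β₀(1-s) Σ_j τ_{j,-} w₋(y_{j,-}/(1-s)) + β₀(s) Σ_j τ_{j,+} w₊(y_{j,+}/s)`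
satisfies `‖u(s)‖_M ≤ (4/π) max(1, 1/λ_min(S,M)) ‖f‖_{M⁻¹}` for every `s ∈ (0,1)`. -/
theorem fully_discrete_stability {N : ℕ} (S M : Matrix (Fin N) (Fin N) ℝ)
    (hS : S.PosDef) (hM : M.PosDef) (f : Fin N → ℝ)
    (Mm Mp : ℕ) (ym : Fin Mm → ℝ) (τm : Fin Mm → ℝ) (yp : Fin Mp → ℝ) (τp : Fin Mp → ℝ)
    (hym : ∀ j, 0 ≤ ym j) (hyp : ∀ j, 0 ≤ yp j)
    (hτm : ∀ j, 0 ≤ τm j) (hτp : ∀ j, 0 ≤ τp j)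
    (hτmsum : ∑ j, τm j ≤ 1) (hτpsum : ∑ j, τp j ≤ 1)
    (s : ℝ) (hs : s ∈ Set.Ioo (0:ℝ) 1) :
    normWeighted M
        (beta0 (1 - s) • ∑ j, τm j • wMinus S M f (ym j / (1 - s)) +
          beta0 s • ∑ j, τp j • wPlus S M f (yp j / s)) ≤
      (4 / Real.pi) * max 1 (1 / lamMinGen S M) * normWeighted M⁻¹ f := by
  obtain ⟨hs0, hs1⟩ := hs
  have hπ : (0:ℝ) < π := Real.pi_pos
  by_cases hN : N = 0
  · subst hN
    have h1 : ∀ (A : Matrix (Fin 0) (Fin 0) ℝ) (x : Fin 0 → ℝ), x ⬝ᵥ A.mulVec x = 0 := by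
      intro A x
      simp [dotProduct]
    have hL : ∀ (A : Matrix (Fin 0) (Fin 0) ℝ) (x : Fin 0 → ℝ), normWeighted A x = 0 := by
      intro A x
      unfold normWeighted
      rw [h1, Real.sqrt_zero]
    rw [hL, hL, mul_zero]
  have hNpos : 0 < N := Nat.pos_of_ne_zero hN
  have hlam : 0 < lamMinGen S M := lamMinGen_pos hNpos hS hM
  set lam := lamMinGen S M with hlamdef
  set K := max 1 (1/lam) with hK
  have hK1 : (1:ℝ) ≤ K := le_max_left _ _
  have hKlam : 1/lam ≤ K := le_max_right _ _
  have hK0 : (0:ℝ) < K := lt_of_lt_of_le one_pos hK1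
  set F := normWeighted M⁻¹ f with hF
  have hF0 : 0 ≤ F := normWeighted_nonneg _ _
  have hKF : 0 ≤ K * F := mul_nonneg hK0.le hF0
  -- bound for wMinus
  have hwm : ∀ y : ℝ, normWeighted M (wMinus S M f y) ≤ K * F := by
    intro y
    have hE : 0 < Real.exp (-y) := Real.exp_pos _
    have hA : (S + Real.exp (-y) • M).PosDef :=
      hS.add_posSemidef (posDef_smul hM hE).posSemidef
    have hcomp : ∀ x, lam * (x ⬝ᵥ M.mulVec x) ≤ x ⬝ᵥ (S + Real.exp (-y) • M).mulVec x := by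
      intro x
      have h1 := lamMinGen_mul_le hS hM x
      have h2 : 0 ≤ Real.exp (-y) * (x ⬝ᵥ M.mulVec x) := mul_nonneg hE.le (dot_nonneg hM x)
      rw [Matrix.add_mulVec, dotProduct_add]
      simp only [Matrix.smul_mulVec, dotProduct_smul, smul_eq_mul]
      rw [← hlamdef] at h1
      linarith
    calc normWeighted M (wMinus S M f y) ≤ (1/lam) * F :=
          solve_bound hA hM f hlam hcomp
      _ ≤ K * F := mul_le_mul_of_nonneg_right hKlam hF0
  -- bound for wPlus
  have hwp : ∀ y : ℝ, normWeighted M (wPlus S M f y) ≤ K * F := by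
    intro y
    have hE : 0 < Real.exp (-y) := Real.exp_pos _
    have hA : (Real.exp (-y) • S + M).PosDef :=
      (posDef_smul hS hE).add_posSemidef hM.posSemidef
    have hcomp : ∀ x, 1 * (x ⬝ᵥ M.mulVec x) ≤ x ⬝ᵥ (Real.exp (-y) • S + M).mulVec x := by
      intro x
      have h2 : 0 ≤ Real.exp (-y) * (x ⬝ᵥ S.mulVec x) := mul_nonneg hE.le (dot_nonneg hS x)
      rw [Matrix.add_mulVec, dotProduct_add]
      simp only [Matrix.smul_mulVec, dotProduct_smul, smul_eq_mul]
      linarith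
    calc normWeighted M (wPlus S M f y) ≤ (1/1) * F :=
          solve_bound hA hM f one_pos hcomp
      _ = F := by norm_num
      _ ≤ K * F := le_mul_of_one_le_left hF0 hK1
  -- bound for weighted sums
  have hsm : normWeighted M (∑ j, τm j • wMinus S M f (ym j / (1 - s))) ≤ K * F := by
    calc normWeighted M (∑ j, τm j • wMinus S M f (ym j / (1 - s)))
        ≤ ∑ j, normWeighted M (τm j • wMinus S M f (ym j / (1 - s))) :=
          normWeighted_sum_le hM _
      _ = ∑ j, τm j * normWeighted M (wMinus S M f (ym j / (1 - s))) := by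
          refine Finset.sum_congr rfl fun j _ => ?_
          rw [normWeighted_smul, abs_of_nonneg (hτm j)]
      _ ≤ ∑ j, τm j * (K * F) :=
          Finset.sum_le_sum fun j _ => mul_le_mul_of_nonneg_left (hwm _) (hτm j)
      _ = (∑ j, τm j) * (K * F) := by rw [← Finset.sum_mul]
      _ ≤ 1 * (K * F) := mul_le_mul_of_nonneg_right hτmsum hKF
      _ = K * F := one_mul _
  have hsp : normWeighted M (∑ j, τp j • wPlus S M f (yp j / s)) ≤ K * F := by
    calc normWeighted M (∑ j, τp j • wPlus S M f (yp j / s))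
        ≤ ∑ j, normWeighted M (τp j • wPlus S M f (yp j / s)) :=
          normWeighted_sum_le hM _
      _ = ∑ j, τp j * normWeighted M (wPlus S M f (yp j / s)) := by
          refine Finset.sum_congr rfl fun j _ => ?_
          rw [normWeighted_smul, abs_of_nonneg (hτp j)]
      _ ≤ ∑ j, τp j * (K * F) :=
          Finset.sum_le_sum fun j _ => mul_le_mul_of_nonneg_left (hwp _) (hτp j)
      _ = (∑ j, τp j) * (K * F) := by rw [← Finset.sum_mul]
      _ ≤ 1 * (K * F) := mul_le_mul_of_nonneg_right hτpsum hKF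
      _ = K * F := one_mul _
  -- final combination
  have hb1 : 0 < beta0 (1 - s) := beta0_pos (by linarith) (by linarith)
  have hb2 : 0 < beta0 s := beta0_pos hs0 hs1
  have hbsum : beta0 (1 - s) + beta0 s ≤ 4 / π := beta0_sum_le hs0 hs1
  calc normWeighted M
        (beta0 (1 - s) • ∑ j, τm j • wMinus S M f (ym j / (1 - s)) +
          beta0 s • ∑ j, τp j • wPlus S M f (yp j / s))
      ≤ normWeighted M (beta0 (1 - s) • ∑ j, τm j • wMinus S M f (ym j / (1 - s))) +
          normWeighted M (beta0 s • ∑ j, τp j • wPlus S M f (yp j / s)) :=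
        normWeighted_add_le hM _ _
    _ = beta0 (1 - s) * normWeighted M (∑ j, τm j • wMinus S M f (ym j / (1 - s))) +
          beta0 s * normWeighted M (∑ j, τp j • wPlus S M f (yp j / s)) := by
        rw [normWeighted_smul, normWeighted_smul, abs_of_pos hb1, abs_of_pos hb2]
    _ ≤ beta0 (1 - s) * (K * F) + beta0 s * (K * F) :=
        add_le_add (mul_le_mul_of_nonneg_left hsm hb1.le)
          (mul_le_mul_of_nonneg_left hsp hb2.le)
    _ = (beta0 (1 - s) + beta0 s) * (K * F) := by ring
    _ ≤ (4 / π) * (K * F) := mul_le_mul_of_nonneg_right hbsum hKF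
    _ = (4 / Real.pi) * K * F := by ring
end

section
/- Let S and M be symmetric positive definite real N×N matrices, f ∈ ℝ^N and y ≥ 0. Let w be the solution of (e^{-y} S + M) w = f, let w̃ ∈ ℝ^N be arbitrary, and set r := f - (e^{-y} S + M) w̃. Then ‖w - w̃‖_M ≤ ‖r‖₂ / ( √(λ_min(M)) · ( e^{-y} λ_min(S, M) + 1 ) ), where ‖r‖₂ is the Euclidean norm of r, λ_min(M) is the smallest eigenvalue of M, and λ_min(S, M) := inf over nonzero x of (xᵀ S x)/(xᵀ M x). -/
open Matrix

/-- The Euclidean norm `‖x‖₂ = √(xᵀ x)`. -/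
noncomputable def normEuclid {N : ℕ} (x : Fin N → ℝ) : ℝ :=
  Real.sqrt (x ⬝ᵥ x)

lemma posdef_dot {N : ℕ} {M : Matrix (Fin N) (Fin N) ℝ} (hM : M.PosDef) {x : Fin N → ℝ}
    (hx : x ≠ 0) : 0 < x ⬝ᵥ M.mulVec x := by simpa using hM.dotProduct_mulVec_pos hx

lemma dot_self_pos {N : ℕ} {x : Fin N → ℝ} (hx : x ≠ 0) : 0 < x ⬝ᵥ x := by
  have := posdef_dot (Matrix.PosDef.one (n := Fin N) (R := ℝ)) hx
  simpa [Matrix.one_mulVec] using this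

lemma cauchy_dot {N : ℕ} (e r : Fin N → ℝ) :
    e ⬝ᵥ r ≤ Real.sqrt (e ⬝ᵥ e) * Real.sqrt (r ⬝ᵥ r) := by
  have h := Finset.sum_mul_sq_le_sq_mul_sq Finset.univ e r
  have hee : 0 ≤ e ⬝ᵥ e := Finset.sum_nonneg fun i _ => mul_self_nonneg _
  calc e ⬝ᵥ r ≤ Real.sqrt ((e ⬝ᵥ r)^2) := by
        rw [Real.sqrt_sq_eq_abs]; exact le_abs_self _
    _ ≤ Real.sqrt ((e ⬝ᵥ e) * (r ⬝ᵥ r)) := by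
        apply Real.sqrt_le_sqrt; simpa [dotProduct, sq] using h
    _ = _ := Real.sqrt_mul hee _

lemma lamMinGen_le {N : ℕ} {S M : Matrix (Fin N) (Fin N) ℝ} (hS : S.PosDef) (hM : M.PosDef)
    {x : Fin N → ℝ} (hx : x ≠ 0) :
    lamMinGen S M ≤ (x ⬝ᵥ S.mulVec x) / (x ⬝ᵥ M.mulVec x) := by
  apply csInf_le
  · refine ⟨0, fun a ha => ?_⟩
    obtain ⟨v, hv, rfl⟩ := ha
    exact div_nonneg (posdef_dot hS hv).le (posdef_dot hM hv).le
  · exact ⟨x, hx, rfl⟩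

lemma lamMinGen_nonneg {N : ℕ} {S M : Matrix (Fin N) (Fin N) ℝ} (hS : S.PosDef)
    (hM : M.PosDef) : 0 ≤ lamMinGen S M := by
  apply Real.sInf_nonneg
  rintro a ⟨v, hv, rfl⟩
  exact div_nonneg (posdef_dot hS hv).le (posdef_dot hM hv).le

lemma ratio_homog {N : ℕ} (M : Matrix (Fin N) (Fin N) ℝ) (x : Fin N → ℝ) {t : ℝ} (ht : t ≠ 0) :
    ((t • x) ⬝ᵥ M.mulVec (t • x)) / ((t • x) ⬝ᵥ (t • x))
      = (x ⬝ᵥ M.mulVec x) / (x ⬝ᵥ x) := by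
  rw [Matrix.mulVec_smul, smul_dotProduct, dotProduct_smul, smul_dotProduct, dotProduct_smul]
  simp only [smul_eq_mul, ← mul_assoc]
  rw [mul_div_mul_left _ _ (mul_ne_zero ht ht)]

lemma lamMinGen_one_pos {N : ℕ} {M : Matrix (Fin N) (Fin N) ℝ} (hM : M.PosDef) (hN : 0 < N) :
    0 < lamMinGen M 1 := by
  haveI : Nonempty (Fin N) := ⟨⟨0, hN⟩⟩
  set φ : (Fin N → ℝ) → ℝ := fun x => (x ⬝ᵥ M.mulVec x) / (x ⬝ᵥ x) with hφ
  have hcontnum : Continuous fun x : Fin N → ℝ => x ⬝ᵥ M.mulVec x := by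
    simp only [dotProduct, mulVec]; fun_prop
  have hcontden : Continuous fun x : Fin N → ℝ => x ⬝ᵥ x := by
    simp only [dotProduct]; fun_prop
  have hsph : IsCompact (Metric.sphere (0 : Fin N → ℝ) 1) := isCompact_sphere 0 1
  have hne : (Metric.sphere (0 : Fin N → ℝ) 1).Nonempty := by
    refine ⟨fun _ => 1, ?_⟩
    have : ‖(fun _ : Fin N => (1 : ℝ))‖ = 1 := by
      simpa using (pi_norm_const (1 : ℝ))
    simp [mem_sphere_iff_norm, this]
  have hxne : ∀ x ∈ Metric.sphere (0 : Fin N → ℝ) 1, x ≠ 0 := by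
    intro x hx h0
    simp [h0] at hx
  have hco : ContinuousOn φ (Metric.sphere (0 : Fin N → ℝ) 1) := by
    apply ContinuousOn.div hcontnum.continuousOn hcontden.continuousOn
    intro x hx
    exact (dot_self_pos (hxne x hx)).ne'
  obtain ⟨x₀, hx₀, hmin⟩ := hsph.exists_isMinOn hne hco
  have hx₀ne : x₀ ≠ 0 := hxne x₀ hx₀
  have hc : 0 < φ x₀ := div_pos (posdef_dot hM hx₀ne) (dot_self_pos hx₀ne)
  refine lt_of_lt_of_le hc ?_
  have himg : φ x₀ ∈ (fun x : Fin N → ℝ => (x ⬝ᵥ M.mulVec x) / (x ⬝ᵥ (1 : Matrix (Fin N) (Fin N) ℝ).mulVec x)) '' {x | x ≠ 0} :=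
    ⟨x₀, hx₀ne, by simp [hφ, Matrix.one_mulVec]⟩
  refine le_csInf ⟨_, himg⟩ ?_
  rintro a ⟨v, hv, rfl⟩
  have hvnorm : ‖v‖ ≠ 0 := norm_ne_zero_iff.mpr hv
  have hu : (‖v‖⁻¹ • v) ∈ Metric.sphere (0 : Fin N → ℝ) 1 := by
    simp [mem_sphere_iff_norm, norm_smul, abs_of_nonneg (norm_nonneg v),
      inv_mul_cancel₀ hvnorm]
  have heq : φ (‖v‖⁻¹ • v) = φ v := ratio_homog M v (inv_ne_zero hvnorm)
  simp only [Matrix.one_mulVec]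
  calc φ x₀ ≤ φ (‖v‖⁻¹ • v) := hmin hu
    _ = φ v := heq

/-- A posteriori error indicator `Δ_{n,+}(y)` (residual bound for the `+` problem):
if `(e^{-y} S + M) w = f` and `r = f - (e^{-y} S + M) w̃`, then
`‖w - w̃‖_M ≤ ‖r‖₂ / (√(λ_min(M)) (e^{-y} λ_min(S,M) + 1))`, where `λ_min(M)` is the
smallest eigenvalue of `M`, i.e. `λ_min(M, I)`. -/
theorem rbm_error_indicator_plus {N : ℕ} (S M : Matrix (Fin N) (Fin N) ℝ)
    (hS : S.PosDef) (hM : M.PosDef) (f : Fin N → ℝ) (y : ℝ) (hy : 0 ≤ y)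
    (w wt : Fin N → ℝ) (hw : (Real.exp (-y) • S + M).mulVec w = f) :
    normWeighted M (w - wt) ≤
      normEuclid (f - (Real.exp (-y) • S + M).mulVec wt) /
        (Real.sqrt (lamMinGen M 1) * (Real.exp (-y) * lamMinGen S M + 1)) := by
  rcases Nat.eq_zero_or_pos N with hN | hN
  · subst hN
    have h1 : ({x : Fin 0 → ℝ | x ≠ 0}) = ∅ := by
      ext x; simp [Subsingleton.elim x 0]
    have h2 : ∀ (A B : Matrix (Fin 0) (Fin 0) ℝ), lamMinGen A B = 0 := by
      intro A B
      simp only [lamMinGen, h1, Set.image_empty, Real.sInf_empty]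
    have h3 : normWeighted M (w - wt) = 0 := by
      simp [normWeighted, dotProduct]
    rw [h3, h2, h2]
    simp
  · set A := Real.exp (-y) • S + M with hA
    set e := w - wt with he
    set r := f - A.mulVec wt with hr
    have hrAe : r = A.mulVec e := by
      rw [hr, he, Matrix.mulVec_sub, hw]
    set lam := lamMinGen S M with hlam
    set mu := lamMinGen M 1 with hmu
    have hmupos : 0 < mu := lamMinGen_one_pos hM hN
    have hlamnn : 0 ≤ lam := lamMinGen_nonneg hS hM
    have hexp : 0 < Real.exp (-y) := Real.exp_pos _
    set K := Real.exp (-y) * lam + 1 with hK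
    have hKpos : 0 < K := by positivity
    have hsm : 0 < Real.sqrt mu := Real.sqrt_pos.mpr hmupos
    have hD : 0 < Real.sqrt mu * K := mul_pos hsm hKpos
    rw [normWeighted, normEuclid, le_div_iff₀ hD]
    have hRnn : 0 ≤ Real.sqrt (r ⬝ᵥ r) := Real.sqrt_nonneg _
    by_cases he0 : e = 0
    · simp only [he0]
      simp only [Matrix.mulVec_zero, dotProduct_zero, Real.sqrt_zero, zero_mul]
      exact hRnn
    · set q := e ⬝ᵥ M.mulVec e with hqdef
      have hq : 0 < q := posdef_dot hM he0
      have hee : 0 < e ⬝ᵥ e := dot_self_pos he0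
      have hsq : 0 < Real.sqrt q := Real.sqrt_pos.mpr hq
      have hmule : mu ≤ q / (e ⬝ᵥ e) := by
        have := lamMinGen_le hM (Matrix.PosDef.one) he0
        simpa [Matrix.one_mulVec] using this
      have hmu' : mu * (e ⬝ᵥ e) ≤ q := (le_div_iff₀ hee).mp hmule
      have hlamle : lam ≤ (e ⬝ᵥ S.mulVec e) / q := lamMinGen_le hS hM he0
      have hlamq : lam * q ≤ e ⬝ᵥ S.mulVec e := (le_div_iff₀ hq).mp hlamle
      have hEq : e ⬝ᵥ r = Real.exp (-y) * (e ⬝ᵥ S.mulVec e) + q := by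
        rw [hrAe, hA]
        simp [Matrix.add_mulVec, Matrix.smul_mulVec, dotProduct_add,
          dotProduct_smul, smul_eq_mul, hqdef]
      have hKq : K * q ≤ e ⬝ᵥ r := by
        rw [hEq, hK]
        nlinarith [mul_le_mul_of_nonneg_left hlamq hexp.le]
      have hCS : e ⬝ᵥ r ≤ Real.sqrt (e ⬝ᵥ e) * Real.sqrt (r ⬝ᵥ r) := cauchy_dot e r
      have hsqee : Real.sqrt (e ⬝ᵥ e) ≤ Real.sqrt q / Real.sqrt mu := by
        rw [← Real.sqrt_div hq.le]
        apply Real.sqrt_le_sqrt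
        rw [le_div_iff₀ hmupos]
        linarith [hmu']
      have hfinal : K * q ≤ (Real.sqrt q / Real.sqrt mu) * Real.sqrt (r ⬝ᵥ r) := by
        calc K * q ≤ e ⬝ᵥ r := hKq
          _ ≤ Real.sqrt (e ⬝ᵥ e) * Real.sqrt (r ⬝ᵥ r) := hCS
          _ ≤ (Real.sqrt q / Real.sqrt mu) * Real.sqrt (r ⬝ᵥ r) :=
              mul_le_mul_of_nonneg_right hsqee hRnn
      have h2 : K * q * Real.sqrt mu ≤ Real.sqrt q * Real.sqrt (r ⬝ᵥ r) := by
        have := mul_le_mul_of_nonneg_right hfinal hsm.le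
        calc K * q * Real.sqrt mu ≤ (Real.sqrt q / Real.sqrt mu) * Real.sqrt (r ⬝ᵥ r) * Real.sqrt mu := this
          _ = Real.sqrt q * Real.sqrt (r ⬝ᵥ r) := by
              field_simp
      have hqq : Real.sqrt q * Real.sqrt q = q := Real.mul_self_sqrt hq.le
      apply (mul_le_mul_iff_of_pos_right hsq).mp
      nlinarith [h2, hqq]
end
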